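/- Let r ≥ 2 and 1 ≤ i ≤ r be integers, and n a nonnegative integer. The number of partitions of n whose (i−1)-bottom dissection has all bottom rectangles above B'_{r−1} empty equals the number of partitions of n whose (r−i)-Durfee dissection has all Durfee squares below D_{r−1} empty. -/

import Mathlib

/-- A partition of `n`: a non-increasing list of positive integers summing to `n`. -/
def IsPartitionOf (n : ℕ) (l : List ℕ) : Prop :=
  l.Pairwise (· ≥ ·) ∧ (∀ x ∈ l, 0 < x) ∧ l.sum = n

/-- The size of the Durfee square of a partition (given as a list of parts):
the largest `k` such that the first `k` parts are all `≥ k`. -/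
def durfSq (l : List ℕ) : ℕ :=
  Nat.findGreatest (fun k => k ≤ l.length ∧ ∀ j < k, k ≤ l.getD j 0) l.length

/-- The parameter `k` of the horizontal Durfee rectangle (`k` columns, `k − 1` rows):
the largest `k` with `k − 1 ≤` the number of parts and the first `k − 1` parts all `≥ k`.
A `1 × 0` rectangle (`k = 1`) is always allowed. -/
def durfRectH (l : List ℕ) : ℕ :=
  Nat.findGreatest (fun k => k - 1 ≤ l.length ∧ ∀ j < k - 1, k ≤ l.getD j 0) (l.length + 1)

/-- Remove `m` successive Durfee squares from the top of the partition. -/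
def sqSteps : ℕ → List ℕ → List ℕ
  | 0, l => l
  | m + 1, l => sqSteps m (l.drop (durfSq l))

/-- Remove `m` successive horizontal Durfee rectangles from the top of the partition. -/
def rectSteps : ℕ → List ℕ → List ℕ
  | 0, l => l
  | m + 1, l => rectSteps m (l.drop (durfRectH l - 1))

/-- Remove `m` successive bottom squares from the bottom of the partition: a bottom square
has side equal to the smallest part, and occupies that many rows at the bottom. -/
def botSqSteps : ℕ → List ℕ → List ℕ
  | 0, l => l
  | m + 1, l => botSqSteps m (l.take (l.length - l.getLastD 0))

/-- Remove `m` successive bottom rectangles (of size `λ_s × (λ_s − 1)`) from the bottom. -/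
def botRectSteps : ℕ → List ℕ → List ℕ
  | 0, l => l
  | m + 1, l => botRectSteps m (l.take (l.length - (l.getLastD 0 - 1)))

/-! ### Auxiliary machinery -/

/-- `λ_t`, the `t`-th part (1-indexed), 0 if out of range. -/
def lamP (l : List ℕ) (t : ℕ) : ℕ := l.getD (t - 1) 0

/-- Square edge from `u` up to `v`. -/
def SqE (l : List ℕ) (u v : ℕ) : Prop :=
  u ≤ v ∧ (v = u ∨ (v ≤ l.length ∧ v - u ≤ lamP l v))

/-- Rectangle edge from `u` up to `v`. -/
def ReE (l : List ℕ) (u v : ℕ) : Prop :=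
  u ≤ v ∧ (v = u ∨ (v ≤ l.length ∧ v - u + 1 ≤ lamP l v))

/-- Chain of `a` square edges from `u` to `e`. -/
def ReachSq (l : List ℕ) : ℕ → ℕ → ℕ → Prop
  | 0, u, e => u = e
  | a + 1, u, e => ∃ v, SqE l u v ∧ ReachSq l a v e

/-- Chain of `b` rectangle edges followed by `a` square edges, from `u` to `e`. -/
def Reach (l : List ℕ) : ℕ → ℕ → ℕ → ℕ → Prop
  | 0, a, u, e => ReachSq l a u e
  | b + 1, a, u, e => ∃ v, ReE l u v ∧ Reach l b a v e

lemma getD_drop' (l : List ℕ) (u j : ℕ) : (l.drop u).getD j 0 = l.getD (u + j) 0 := by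
  simp [List.getD_eq_getElem?_getD, List.getElem?_drop]

lemma lamP_pos {l : List ℕ} (hp : ∀ x ∈ l, 0 < x) {t : ℕ} (h1 : 1 ≤ t)
    (h2 : t ≤ l.length) : 1 ≤ lamP l t := by
  have ht : t - 1 < l.length := by omega
  rw [lamP, List.getD_eq_getElem l 0 ht]
  exact hp _ (l.getElem_mem ht)

lemma lamP_anti {l : List ℕ} (hs : l.Pairwise (· ≥ ·)) {i j : ℕ} (h1 : 1 ≤ i)
    (h2 : i ≤ j) (h3 : j ≤ l.length) : lamP l j ≤ lamP l i := by
  have hj : j - 1 < l.length := by omega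
  have hi : i - 1 < l.length := by omega
  rw [lamP, lamP, List.getD_eq_getElem l 0 hj, List.getD_eq_getElem l 0 hi]
  rcases eq_or_lt_of_le h2 with rfl | hlt
  · exact le_rfl
  · exact List.pairwise_iff_getElem.1 hs _ _ hi hj (by omega)

lemma reachSq_refl (l : List ℕ) : ∀ a u, ReachSq l a u u := by
  intro a
  induction a with
  | zero => intro u; rfl
  | succ a ih => intro u; exact ⟨u, ⟨le_rfl, Or.inl rfl⟩, ih u⟩

lemma reach_refl (l : List ℕ) : ∀ b a u, Reach l b a u u := by
  intro b
  induction b with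
  | zero => intro a u; exact reachSq_refl l a u
  | succ b ih => intro a u; exact ⟨u, ⟨le_rfl, Or.inl rfl⟩, ih a u⟩

lemma reachSq_mono_start (l : List ℕ) :
    ∀ a u u' e, ReachSq l a u e → u ≤ u' → u' ≤ e → ReachSq l a u' e := by
  intro a
  induction a with
  | zero =>
    intro u u' e h h1 h2
    have h' : u = e := h
    have : u' = e := by omega
    exact this
  | succ a ih =>
    rintro u u' e ⟨v, ⟨huv, hc⟩, hr⟩ h1 h2
    rcases le_or_gt v u' with hv | hv
    · exact ⟨u', ⟨le_rfl, Or.inl rfl⟩, ih v u' e hr hv h2⟩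
    · refine ⟨v, ⟨hv.le, ?_⟩, hr⟩
      rcases hc with rfl | hc
      · exact absurd h1 (by omega)
      · exact Or.inr ⟨hc.1, by omega⟩

lemma reach_mono_start (l : List ℕ) :
    ∀ b a u u' e, Reach l b a u e → u ≤ u' → u' ≤ e → Reach l b a u' e := by
  intro b
  induction b with
  | zero => intro a u u' e h h1 h2; exact reachSq_mono_start l a u u' e h h1 h2
  | succ b ih =>
    rintro a u u' e ⟨v, ⟨huv, hc⟩, hr⟩ h1 h2
    rcases le_or_gt v u' with hv | hv
    · exact ⟨u', ⟨le_rfl, Or.inl rfl⟩, ih a v u' e hr hv h2⟩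
    · refine ⟨v, ⟨hv.le, ?_⟩, hr⟩
      rcases hc with rfl | hc
      · exact absurd h1 (by omega)
      · exact Or.inr ⟨hc.1, by omega⟩

/-- End of chain can be lowered (uses monotonicity of parts). -/
lemma reachSq_mono_end {l : List ℕ} (hs : l.Pairwise (· ≥ ·)) :
    ∀ a u e e', ReachSq l a u e → u ≤ e' → e' ≤ e → ReachSq l a u e' := by
  intro a
  induction a with
  | zero =>
    intro u e e' h h1 h2
    have h' : u = e := h
    have : u = e' := by omega
    exact this
  | succ a ih =>
    rintro u e e' ⟨v, ⟨huv, hc⟩, hr⟩ h1 h2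
    rcases le_or_gt v e' with hv | hv
    · exact ⟨v, ⟨huv, hc⟩, ih v e e' hr hv h2⟩
    · refine ⟨e', ⟨h1, ?_⟩, reachSq_refl l a e'⟩
      rcases hc with rfl | hc
      · exact absurd h1 (by omega)
      · rcases Nat.eq_or_lt_of_le h1 with rfl | h1'
        · exact Or.inl rfl
        · refine Or.inr ⟨by omega, ?_⟩
          have := lamP_anti hs (show 1 ≤ e' by omega) hv.le hc.1
          omega

lemma reach_mono_end {l : List ℕ} (hs : l.Pairwise (· ≥ ·)) :
    ∀ b a u e e', Reach l b a u e → u ≤ e' → e' ≤ e → Reach l b a u e' := by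
  intro b
  induction b with
  | zero => intro a u e e' h h1 h2; exact reachSq_mono_end hs a u e e' h h1 h2
  | succ b ih =>
    rintro a u e e' ⟨v, ⟨huv, hc⟩, hr⟩ h1 h2
    rcases le_or_gt v e' with hv | hv
    · exact ⟨v, ⟨huv, hc⟩, ih a v e e' hr hv h2⟩
    · refine ⟨e', ⟨h1, ?_⟩, reach_refl l b a e'⟩
      rcases hc with rfl | hc
      · exact absurd h1 (by omega)
      · rcases Nat.eq_or_lt_of_le h1 with rfl | h1'
        · exact Or.inl rfl
        · refine Or.inr ⟨by omega, ?_⟩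
          have := lamP_anti hs (show 1 ≤ e' by omega) hv.le hc.1
          omega

lemma reachSq_snoc (l : List ℕ) :
    ∀ a u e, ReachSq l (a + 1) u e ↔ ∃ v, ReachSq l a u v ∧ SqE l v e := by
  intro a
  induction a with
  | zero =>
    intro u e
    constructor
    · rintro ⟨v, hsv, hve⟩
      have hv : v = e := hve
      subst hv
      exact ⟨u, rfl, hsv⟩
    · rintro ⟨v, huv, hve⟩
      have hv : u = v := huv
      subst hv
      exact ⟨e, hve, rfl⟩
  | succ a ih =>
    intro u e
    constructor
    · rintro ⟨w, hw, hr⟩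
      obtain ⟨v, hr', hve⟩ := (ih w e).1 hr
      exact ⟨v, ⟨w, hw, hr'⟩, hve⟩
    · rintro ⟨v, ⟨w, hw, hr'⟩, hve⟩
      exact ⟨w, hw, (ih w e).2 ⟨v, hr', hve⟩⟩

/-- Appending a square edge at the end of a chain. -/
lemma reach_snoc_sq (l : List ℕ) :
    ∀ b a u e, Reach l b (a + 1) u e ↔ ∃ v, Reach l b a u v ∧ SqE l v e := by
  intro b
  induction b with
  | zero => intro a u e; exact reachSq_snoc l a u e
  | succ b ih =>
    intro a u e
    constructor
    · rintro ⟨w, hw, hr⟩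
      obtain ⟨v, hr', hve⟩ := (ih a w e).1 hr
      exact ⟨v, ⟨w, hw, hr'⟩, hve⟩
    · rintro ⟨v, ⟨w, hw, hr'⟩, hve⟩
      exact ⟨w, hw, (ih a w e).2 ⟨v, hr', hve⟩⟩

/-- Appending a rectangle edge at the end of a rectangles-only chain. -/
lemma reach_snoc_re (l : List ℕ) :
    ∀ b u e, Reach l (b + 1) 0 u e ↔ ∃ v, Reach l b 0 u v ∧ ReE l v e := by
  intro b
  induction b with
  | zero =>
    intro u e
    constructor
    · rintro ⟨v, hsv, hve⟩
      have hv : v = e := hve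
      subst hv
      exact ⟨u, rfl, hsv⟩
    · rintro ⟨v, huv, hve⟩
      have hv : u = v := huv
      subst hv
      exact ⟨e, hve, rfl⟩
  | succ b ih =>
    intro u e
    constructor
    · rintro ⟨w, hw, hr⟩
      obtain ⟨v, hr', hve⟩ := (ih w e).1 hr
      exact ⟨v, ⟨w, hw, hr'⟩, hve⟩
    · rintro ⟨v, ⟨w, hw, hr'⟩, hve⟩
      exact ⟨w, hw, (ih w e).2 ⟨v, hr', hve⟩⟩

/-! ### `findGreatest` specifications for `durfSq` and `durfRectH` -/

lemma durfSq_le (l : List ℕ) : durfSq l ≤ l.length := Nat.findGreatest_le _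

lemma durfSq_spec {l : List ℕ} (h : durfSq l ≠ 0) :
    ∀ j < durfSq l, durfSq l ≤ l.getD j 0 :=
  (Nat.findGreatest_of_ne_zero rfl h).2

lemma le_durfSq {l : List ℕ} {k : ℕ} (hk : k ≤ l.length)
    (h : ∀ j < k, k ≤ l.getD j 0) : k ≤ durfSq l :=
  Nat.le_findGreatest hk ⟨hk, h⟩

lemma durfRectH_le (l : List ℕ) : durfRectH l ≤ l.length + 1 := Nat.findGreatest_le _

lemma durfRectH_spec {l : List ℕ} (h : durfRectH l ≠ 0) :
    ∀ j < durfRectH l - 1, durfRectH l ≤ l.getD j 0 :=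
  (Nat.findGreatest_of_ne_zero rfl h).2

lemma le_durfRectH {l : List ℕ} {k : ℕ} (hk : k ≤ l.length + 1) (hk1 : k - 1 ≤ l.length)
    (h : ∀ j < k - 1, k ≤ l.getD j 0) : k ≤ durfRectH l :=
  Nat.le_findGreatest hk ⟨hk1, h⟩

lemma one_le_durfRectH (l : List ℕ) : 1 ≤ durfRectH l :=
  le_durfRectH (by omega) (by omega) (fun j hj => by omega)

/-! ### Durfee square / rectangle steps are maximal edges -/

lemma durfSq_edge {l : List ℕ} (hs : l.Pairwise (· ≥ ·)) {u : ℕ} (hu : u ≤ l.length) :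
    SqE l u (u + durfSq (l.drop u)) ∧ ∀ v, SqE l u v → v ≤ u + durfSq (l.drop u) := by
  have hlen : (l.drop u).length = l.length - u := by simp
  have hd_le : durfSq (l.drop u) ≤ l.length - u := hlen ▸ durfSq_le (l.drop u)
  constructor
  · rcases Nat.eq_zero_or_pos (durfSq (l.drop u)) with h0 | h0
    · rw [h0]
      exact ⟨le_rfl, Or.inl rfl⟩
    · refine ⟨by omega, Or.inr ⟨by omega, ?_⟩⟩
      have hsp := durfSq_spec (l := l.drop u) (by omega) (durfSq (l.drop u) - 1) (by omega)
      rw [getD_drop'] at hsp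
      have heq : lamP l (u + durfSq (l.drop u)) = l.getD (u + (durfSq (l.drop u) - 1)) 0 := by
        simp only [lamP]
        congr 1
        omega
      rw [heq]
      omega
  · rintro v ⟨huv, hc⟩
    rcases hc with rfl | ⟨hvl, hvk⟩
    · omega
    · rcases Nat.eq_or_lt_of_le huv with rfl | huv'
      · omega
      · have hk : v - u ≤ durfSq (l.drop u) := by
          refine le_durfSq (by rw [hlen]; omega) (fun j hj => ?_)
          rw [getD_drop']
          have ha : lamP l v ≤ lamP l (u + j + 1) := lamP_anti hs (by omega) (by omega) hvl
          have hb : lamP l (u + j + 1) = l.getD (u + j) 0 := by simp [lamP]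
          omega
        omega

lemma durfRect_edge {l : List ℕ} (hs : l.Pairwise (· ≥ ·)) {u : ℕ} (hu : u ≤ l.length) :
    ReE l u (u + (durfRectH (l.drop u) - 1)) ∧
      ∀ v, ReE l u v → v ≤ u + (durfRectH (l.drop u) - 1) := by
  have hlen : (l.drop u).length = l.length - u := by simp
  have h1 : 1 ≤ durfRectH (l.drop u) := one_le_durfRectH _
  have hd_le : durfRectH (l.drop u) ≤ l.length - u + 1 := by
    have := durfRectH_le (l.drop u)
    rw [hlen] at this
    omega
  constructor
  · rcases Nat.lt_or_ge (durfRectH (l.drop u)) 2 with h2 | h2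
    · have he1 : durfRectH (l.drop u) - 1 = 0 := by omega
      rw [he1]
      exact ⟨le_rfl, Or.inl rfl⟩
    · refine ⟨by omega, Or.inr ⟨by omega, ?_⟩⟩
      have hsp := durfRectH_spec (l := l.drop u) (by omega) (durfRectH (l.drop u) - 2)
        (by omega)
      rw [getD_drop'] at hsp
      have heq : lamP l (u + (durfRectH (l.drop u) - 1))
          = l.getD (u + (durfRectH (l.drop u) - 2)) 0 := by
        simp only [lamP]
        congr 1
        omega
      rw [heq]
      omega
  · rintro v ⟨huv, hc⟩
    rcases hc with rfl | ⟨hvl, hvk⟩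
    · omega
    · rcases Nat.eq_or_lt_of_le huv with rfl | huv'
      · omega
      · have hk : v - u + 1 ≤ durfRectH (l.drop u) := by
          refine le_durfRectH (by rw [hlen]; omega) (by rw [hlen]; omega) (fun j hj => ?_)
          rw [getD_drop']
          have ha : lamP l v ≤ lamP l (u + j + 1) := lamP_anti hs (by omega) (by omega) hvl
          have hb : lamP l (u + j + 1) = l.getD (u + j) 0 := by simp [lamP]
          omega
        omega

/-! ### The Durfee dissection as chains -/

lemma durfee_iff {l : List ℕ} (hs : l.Pairwise (· ≥ ·)) :
    ∀ b a u, u ≤ l.length →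
      (sqSteps a (rectSteps b (l.drop u)) = [] ↔ Reach l b a u l.length) := by
  have sqcase : ∀ a u, u ≤ l.length →
      (sqSteps a (l.drop u) = [] ↔ ReachSq l a u l.length) := by
    intro a
    induction a with
    | zero =>
      intro u hu
      show l.drop u = [] ↔ ReachSq l 0 u l.length
      rw [List.drop_eq_nil_iff]
      show _ ↔ u = l.length
      omega
    | succ a ih =>
      intro u hu
      obtain ⟨hedge, hmax⟩ := durfSq_edge hs hu
      have hd_le : u + durfSq (l.drop u) ≤ l.length := by
        rcases hedge.2 with h | h
        · have := durfSq_le (l.drop u)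
          simp at this
          omega
        · exact h.1
      have hstep : sqSteps (a + 1) (l.drop u) = sqSteps a (l.drop (u + durfSq (l.drop u))) := by
        show sqSteps a ((l.drop u).drop (durfSq (l.drop u))) = _
        rw [List.drop_drop]
      rw [hstep, ih (u + durfSq (l.drop u)) hd_le]
      constructor
      · intro h
        exact ⟨u + durfSq (l.drop u), hedge, h⟩
      · rintro ⟨v, hsv, hr⟩
        exact reachSq_mono_start l a v (u + durfSq (l.drop u)) l.length hr (hmax v hsv) hd_le
  intro b
  induction b with
  | zero => intro a u hu; exact sqcase a u hu
  | succ b ih =>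
    intro a u hu
    obtain ⟨hedge, hmax⟩ := durfRect_edge hs hu
    have hd_le : u + (durfRectH (l.drop u) - 1) ≤ l.length := by
      have h1 := one_le_durfRectH (l.drop u)
      have h2 := durfRectH_le (l.drop u)
      simp at h2
      omega
    have hstep : rectSteps (b + 1) (l.drop u)
        = rectSteps b (l.drop (u + (durfRectH (l.drop u) - 1))) := by
      show rectSteps b ((l.drop u).drop (durfRectH (l.drop u) - 1)) = _
      rw [List.drop_drop]
    rw [hstep, ih a (u + (durfRectH (l.drop u) - 1)) hd_le]
    constructor
    · intro h
      exact ⟨u + (durfRectH (l.drop u) - 1), hedge, h⟩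
    · rintro ⟨v, hsv, hr⟩
      exact reach_mono_start l b a v (u + (durfRectH (l.drop u) - 1)) l.length hr
        (hmax v hsv) hd_le

/-! ### The bottom dissection as (reversed) chains -/

lemma take_getLastD {l : List ℕ} {t : ℕ} (h1 : 0 < t) (h2 : t ≤ l.length) :
    (l.take t).getLastD 0 = lamP l t := by
  have hlt : (l.take t).length = t := by
    rw [List.length_take]
    omega
  rw [List.getLastD_eq_getLast?, List.getLast?_eq_getElem?, hlt, lamP,
    List.getD_eq_getElem?_getD]
  congr 1
  exact List.getElem?_take_of_lt (by omega)

lemma botSq_step {l : List ℕ} {t : ℕ} (h2 : t ≤ l.length) (m : ℕ) :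
    botSqSteps (m + 1) (l.take t) = botSqSteps m (l.take (t - lamP l t)) := by
  show botSqSteps m ((l.take t).take ((l.take t).length - (l.take t).getLastD 0)) = _
  rcases Nat.eq_zero_or_pos t with rfl | ht
  · simp
  · rw [take_getLastD ht h2, List.take_take, List.length_take,
      show (t ⊓ l.length - lamP l t) ⊓ t = t - lamP l t by omega]

lemma botRect_step {l : List ℕ} {t : ℕ} (h2 : t ≤ l.length) (m : ℕ) :
    botRectSteps (m + 1) (l.take t) = botRectSteps m (l.take (t - (lamP l t - 1))) := by
  show botRectSteps m
    ((l.take t).take ((l.take t).length - ((l.take t).getLastD 0 - 1))) = _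
  rcases Nat.eq_zero_or_pos t with rfl | ht
  · simp
  · rw [take_getLastD ht h2, List.take_take, List.length_take,
      show (t ⊓ l.length - (lamP l t - 1)) ⊓ t = t - (lamP l t - 1) by omega]

lemma bottom_iff {l : List ℕ} (hs : l.Pairwise (· ≥ ·)) (hp : ∀ x ∈ l, 0 < x) :
    ∀ a b t, t ≤ l.length →
      (botRectSteps b (botSqSteps a (l.take t)) = [] ↔ Reach l b a 0 t) := by
  have recase : ∀ b t, t ≤ l.length →
      (botRectSteps b (l.take t) = [] ↔ Reach l b 0 0 t) := by
    intro b
    induction b with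
    | zero =>
      intro t ht
      show l.take t = [] ↔ ReachSq l 0 0 t
      rw [List.take_eq_nil_iff]
      show _ ↔ 0 = t
      constructor
      · rintro (rfl | rfl)
        · rfl
        · simp at ht
          omega
      · rintro rfl
        exact Or.inl rfl
    | succ b ih =>
      intro t ht
      rw [botRect_step ht b, ih _ (by omega)]
      constructor
      · intro h
        refine (reach_snoc_re l b 0 t).2 ⟨t - (lamP l t - 1), h, ⟨by omega, ?_⟩⟩
        rcases Nat.eq_zero_or_pos t with rfl | ht0
        · exact Or.inl (by omega)
        · have hm1 : 1 ≤ lamP l t := lamP_pos hp ht0 ht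
          exact Or.inr ⟨ht, by omega⟩
      · intro h
        obtain ⟨v, hr, hvt⟩ := (reach_snoc_re l b 0 t).1 h
        have hv : t - (lamP l t - 1) ≤ v := by
          rcases hvt.2 with rfl | ⟨_, hk⟩
          · omega
          · omega
        exact reach_mono_end hs b 0 0 v (t - (lamP l t - 1)) hr (by omega) hv
  intro a
  induction a with
  | zero => intro b t ht; exact recase b t ht
  | succ a ih =>
    intro b t ht
    rw [botSq_step ht a, ih b _ (by omega)]
    constructor
    · intro h
      refine (reach_snoc_sq l b a 0 t).2 ⟨t - lamP l t, h, ⟨by omega, ?_⟩⟩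
      rcases Nat.eq_zero_or_pos t with rfl | ht0
      · exact Or.inl (by omega)
      · exact Or.inr ⟨ht, by omega⟩
    · intro h
      obtain ⟨v, hr, hvt⟩ := (reach_snoc_sq l b a 0 t).1 h
      have hv : t - lamP l t ≤ v := by
        rcases hvt.2 with rfl | ⟨_, hk⟩
        · omega
        · omega
      exact reach_mono_end hs b a 0 v (t - lamP l t) hr (by omega) hv

/-- The pointwise equivalence of the two dissection conditions. -/
lemma bottom_iff_durfee {l : List ℕ} (hs : l.Pairwise (· ≥ ·)) (hp : ∀ x ∈ l, 0 < x)
    (a b : ℕ) :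
    botRectSteps b (botSqSteps a l) = [] ↔ sqSteps a (rectSteps b l) = [] := by
  have h1 := bottom_iff hs hp a b l.length le_rfl
  have h2 := durfee_iff hs b a 0 (Nat.zero_le _)
  rw [List.take_length] at h1
  rw [List.drop_zero] at h2
  rw [h1, h2]

/-- Theorem `𝓑_{r,i} = 𝓓_{r,i}` of the paper: for `2 ≤ r`, `1 ≤ i ≤ r`, the number of
partitions of `n` whose `(i−1)`-bottom dissection (`i−1` bottom squares followed by bottom
rectangles) has all bottom rectangles above `B'_{r−1}` empty equals the number of partitions
of `n` whose `(r−i)`-Durfee dissection (`r−i` horizontal Durfee rectangles followed by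
Durfee squares) has all Durfee squares below `D_{r−1}` empty. -/
theorem bottom_eq_durfee (r i n : ℕ) (hr : 2 ≤ r) (hi1 : 1 ≤ i) (hir : i ≤ r) :
    Set.ncard {l : List ℕ | IsPartitionOf n l ∧
        botRectSteps (r - i) (botSqSteps (i - 1) l) = []} =
    Set.ncard {l : List ℕ | IsPartitionOf n l ∧
        sqSteps (i - 1) (rectSteps (r - i) l) = []} := by
  congr 1
  ext l
  simp only [Set.mem_setOf_eq]
  constructor
  · rintro ⟨hpart, h⟩
    exact ⟨hpart, (bottom_iff_durfee hpart.1 hpart.2.1 (i - 1) (r - i)).1 h⟩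
  · rintro ⟨hpart, h⟩
    exact ⟨hpart, (bottom_iff_durfee hpart.1 hpart.2.1 (i - 1) (r - i)).2 h⟩
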